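/- Let G be a group, μ a unitary character of G (|μ| ≡ 1), δ > 0, and f : G → ℂ satisfying |f(xy) + μ(y) f(xy⁻¹) - 2 f(x) f(y)| ≤ δ for all x, y ∈ G. Then either f is bounded, or f satisfies the μ-d'Alembert equation f(xy) + μ(y) f(xy⁻¹) = 2 f(x) f(y) exactly for all x, y ∈ G. -/

import Mathlib

theorem stmt_13 {G : Type*} [Group G] (μ f : G → ℂ) (δ : ℝ) (hδ : 0 < δ)
    (hμ : ∀ x y, μ (x * y) = μ x * μ y) (hμ1 : ∀ x, ‖μ x‖ = 1)
    (hf : ∀ x y, ‖f (x * y) + μ y * f (x * y⁻¹) - 2 * f x * f y‖ ≤ δ) :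
    (∃ C : ℝ, ∀ x, ‖f x‖ ≤ C) ∨
    (∀ x y, f (x * y) + μ y * f (x * y⁻¹) = 2 * f x * f y) := by
  by_cases hb : ∃ C : ℝ, ∀ x, ‖f x‖ ≤ C
  · exact Or.inl hb
  right
  push_neg at hb
  -- key: anything whose product with all f z is bounded must vanish
  have key : ∀ (c : ℂ) (K : ℝ), (∀ z, ‖f z * c‖ ≤ K) → c = 0 := by
    intro c K h
    by_contra hc
    have hcpos : 0 < ‖c‖ := norm_pos_iff.mpr hc
    obtain ⟨z, hz⟩ := hb (K / ‖c‖)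
    have h1 := h z
    rw [norm_mul] at h1
    rw [div_lt_iff₀ hcpos] at hz
    nlinarith
  have hμ0 : ∀ x, μ x ≠ 0 := by
    intro x hx
    have := hμ1 x
    rw [hx] at this
    simp at this
  have hμone : μ 1 = 1 := by
    have h := hμ 1 1
    rw [mul_one] at h
    have h2 : μ 1 * 1 = μ 1 * μ 1 := by rw [mul_one]; exact h
    exact (mul_left_cancel₀ (hμ0 1) h2).symm
  have hμinv : ∀ x : G, μ x * μ x⁻¹ = 1 := by
    intro x
    rw [← hμ]
    simp [hμone]
  -- evenness: f y = μ y * f y⁻¹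
  have heven : ∀ y, f y = μ y * f y⁻¹ := by
    intro y
    have hkey := key (2 * (μ y * f y⁻¹ - f y)) (2 * δ) ?_
    · linear_combination -hkey / 2
    intro z
    have h1 := hf z y
    have h2 := hf z y⁻¹
    simp only [inv_inv] at h2
    have hid : f z * (2 * (μ y * f y⁻¹ - f y)) =
        (f (z * y) + μ y * f (z * y⁻¹) - 2 * f z * f y)
        - μ y * (f (z * y⁻¹) + μ y⁻¹ * f (z * y) - 2 * f z * f y⁻¹) := by
      linear_combination f (z * y) * hμinv y
    rw [hid]
    have ny : ‖μ y‖ = 1 := by exact hμ1 y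
    calc ‖(f (z * y) + μ y * f (z * y⁻¹) - 2 * f z * f y)
          - μ y * (f (z * y⁻¹) + μ y⁻¹ * f (z * y) - 2 * f z * f y⁻¹)‖
        ≤ ‖f (z * y) + μ y * f (z * y⁻¹) - 2 * f z * f y‖
          + ‖μ y * (f (z * y⁻¹) + μ y⁻¹ * f (z * y) - 2 * f z * f y⁻¹)‖ := norm_sub_le _ _
      _ = ‖f (z * y) + μ y * f (z * y⁻¹) - 2 * f z * f y‖
          + ‖f (z * y⁻¹) + μ y⁻¹ * f (z * y) - 2 * f z * f y⁻¹‖ := by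
            rw [norm_mul, ny, one_mul]
      _ ≤ δ + δ := add_le_add h1 h2
      _ = 2 * δ := by ring
  -- left version of the inequality
  have hf' : ∀ x y, ‖f (x * y) + μ x * f (x⁻¹ * y) - 2 * f x * f y‖ ≤ δ := by
    intro x y
    have h := hf y⁻¹ x⁻¹
    simp only [inv_inv] at h
    have h1 : f (x * y) = μ x * μ y * f (y⁻¹ * x⁻¹) := by
      have := heven (x * y)
      rwa [hμ, mul_inv_rev] at this
    have h2 : f (x⁻¹ * y) = μ x⁻¹ * μ y * f (y⁻¹ * x) := by
      have := heven (x⁻¹ * y)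
      rwa [hμ, mul_inv_rev, inv_inv] at this
    have h3 := heven x
    have h4 := heven y
    have hid : f (x * y) + μ x * f (x⁻¹ * y) - 2 * f x * f y =
        μ x * μ y * (f (y⁻¹ * x⁻¹) + μ x⁻¹ * f (y⁻¹ * x) - 2 * f y⁻¹ * f x⁻¹) := by
      linear_combination h1 + μ x * h2 - 2 * f y * h3 - 2 * μ x * f x⁻¹ * h4
    rw [hid, norm_mul, norm_mul, hμ1, hμ1, one_mul, one_mul]
    exact h
  -- main step
  intro x y
  have hbound : ∀ z, ‖f z *
      (2 * (f (x * y) + μ y * f (x * y⁻¹) - 2 * f x * f y))‖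
      ≤ (4 + 2 * ‖f y‖) * δ := by
    intro z
    have e1 := hf' z (x * y)
    have e2 := hf' z (x * y⁻¹)
    have e3 := hf' z x
    have e4 := hf (z * x) y
    have e5 := hf (z⁻¹ * x) y
    simp only [← mul_assoc] at e1 e2
    have hid : f z * (2 * (f (x * y) + μ y * f (x * y⁻¹) - 2 * f x * f y)) =
        -(f (z * x * y) + μ z * f (z⁻¹ * x * y) - 2 * f z * f (x * y))
        - μ y * (f (z * x * y⁻¹) + μ z * f (z⁻¹ * x * y⁻¹) - 2 * f z * f (x * y⁻¹))
        + 2 * f y * (f (z * x) + μ z * f (z⁻¹ * x) - 2 * f z * f x)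
        + (f (z * x * y) + μ y * f (z * x * y⁻¹) - 2 * f (z * x) * f y)
        + μ z * (f (z⁻¹ * x * y) + μ y * f (z⁻¹ * x * y⁻¹) - 2 * f (z⁻¹ * x) * f y) := by
      ring
    rw [hid]
    have ny : ‖μ y‖ = 1 := by exact hμ1 y
    have nz : ‖μ z‖ = 1 := by exact hμ1 z
    set A := f (z * x * y) + μ z * f (z⁻¹ * x * y) - 2 * f z * f (x * y) with hA
    set B := f (z * x * y⁻¹) + μ z * f (z⁻¹ * x * y⁻¹) - 2 * f z * f (x * y⁻¹) with hB
    set C := f (z * x) + μ z * f (z⁻¹ * x) - 2 * f z * f x with hC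
    set D := f (z * x * y) + μ y * f (z * x * y⁻¹) - 2 * f (z * x) * f y with hD
    set E := f (z⁻¹ * x * y) + μ y * f (z⁻¹ * x * y⁻¹) - 2 * f (z⁻¹ * x) * f y with hE
    have s1 : ‖-A - μ y * B + 2 * f y * C + D + μ z * E‖
        ≤ ‖-A - μ y * B‖ + ‖2 * f y * C‖ + ‖D‖ + ‖μ z * E‖ := by
      calc ‖-A - μ y * B + 2 * f y * C + D + μ z * E‖
          ≤ ‖-A - μ y * B + 2 * f y * C + D‖ + ‖μ z * E‖ := norm_add_le _ _
        _ ≤ (‖-A - μ y * B + 2 * f y * C‖ + ‖D‖) + ‖μ z * E‖ := by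
            have := norm_add_le (-A - μ y * B + 2 * f y * C) D; linarith
        _ ≤ ((‖-A - μ y * B‖ + ‖2 * f y * C‖) + ‖D‖) + ‖μ z * E‖ := by
            have := norm_add_le (-A - μ y * B) (2 * f y * C); linarith
        _ = _ := by ring
    have t1 : ‖-A - μ y * B‖ ≤ ‖A‖ + ‖B‖ := by
      calc ‖-A - μ y * B‖ ≤ ‖-A‖ + ‖μ y * B‖ := norm_sub_le _ _
        _ = ‖A‖ + ‖μ y‖ * ‖B‖ := by rw [norm_neg, norm_mul]
        _ = ‖A‖ + ‖B‖ := by rw [ny, one_mul]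
    have t2 : ‖2 * f y * C‖ = 2 * ‖f y‖ * ‖C‖ := by
      rw [norm_mul, norm_mul]
      norm_num
    have t3 : ‖μ z * E‖ = ‖E‖ := by rw [norm_mul, nz, one_mul]
    have hfy : (0:ℝ) ≤ ‖f y‖ := norm_nonneg _
    have hCb : 2 * ‖f y‖ * ‖C‖ ≤ 2 * ‖f y‖ * δ := by
      apply mul_le_mul_of_nonneg_left e3
      positivity
    nlinarith [t1, t2, t3, s1, e1, e2, e4, e5]
  have h0 := key _ ((4 + 2 * ‖f y‖) * δ) hbound
  linear_combination h0 / 2
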